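/- Strict improvement of InterZono over Zonotope in an example: there exist reals l < u and a corresponding parallelogram P = {(x,y) : l ≤ x ≤ u, kx + d ≤ y ≤ kx + c} (with k, c, d from the parallelogram tanh relaxation) and box B = [l,u] × [tanh(l), tanh(u)] such that P ∩ B is a proper subset of both P and B, while still containing the graph {(x, tanh x) : x ∈ [l,u]}. -/

import Mathlib

open Real

lemma my_continuous_tanh : Continuous Real.tanh := by
  have : Real.tanh = fun x => Real.sinh x / Real.cosh x := by
    funext x; exact Real.tanh_eq_sinh_div_cosh x
  rw [this]
  exact Real.continuous_sinh.div Real.continuous_cosh (fun x => (Real.cosh_pos x).ne')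

lemma my_tanh_strictMono : StrictMono Real.tanh := by
  intro a b hab
  have hca := Real.cosh_pos (x := a)
  have hcb := Real.cosh_pos (x := b)
  have hs : 0 < Real.sinh (b - a) := Real.sinh_pos_iff.2 (by linarith)
  rw [Real.sinh_sub] at hs
  rw [Real.tanh_eq_sinh_div_cosh, Real.tanh_eq_sinh_div_cosh, div_lt_div_iff₀ hca hcb]
  nlinarith

lemma my_tanh_two_pos : 0 < Real.tanh 2 := by
  have := my_tanh_strictMono (a := 0) (b := 2) (by norm_num)
  simpa using this

lemma my_tanh_exp_form (x : ℝ) :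
    Real.tanh x = (Real.exp (2*x) - 1) / (Real.exp (2*x) + 1) := by
  rw [Real.tanh_eq_sinh_div_cosh, Real.sinh_eq, Real.cosh_eq]
  rw [div_eq_div_iff (by positivity) (by positivity)]
  have h2 : Real.exp (2*x) = Real.exp x * Real.exp x := by rw [← Real.exp_add]; ring_nf
  have he : Real.exp (-x) = 1 / Real.exp x := by rw [Real.exp_neg]; ring
  have hp : Real.exp x > 0 := Real.exp_pos x
  field_simp [he, h2]
  have hinv : Real.exp x * (1 / Real.exp x) = 1 := by rw [mul_one_div, div_self hp.ne']
  rw [he, show x * 2 = 2 * x by ring, h2]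
  linear_combination (-2 * Real.exp x) * hinv

lemma my_tanh_one_gt : Real.tanh 2 / 2 < Real.tanh 1 := by
  have h1 := my_tanh_exp_form 1
  have h2 := my_tanh_exp_form 2
  norm_num at h1 h2
  have h4 : Real.exp 4 = Real.exp 2 * Real.exp 2 := by rw [← Real.exp_add]; norm_num
  have ht : 1 < Real.exp 2 := by
    have := Real.add_one_lt_exp (x := 2) (by norm_num); linarith
  rw [h1, h2, h4, div_div, div_lt_div_iff₀ (by nlinarith) (by positivity)]
  nlinarith [sq_nonneg (Real.exp 2 - 1), sq_nonneg (Real.exp 2 + 1),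
    mul_pos (mul_pos (sub_pos.2 ht) (sub_pos.2 ht)) (sub_pos.2 ht)]

open Real in
/-- Strict improvement of InterZono over Zonotope in an example: for some
`l < u`, the intersection of the parallelogram relaxation `P` and the box
relaxation `B` of `tanh` on `[l,u]` is a proper subset of each one, while still
containing the graph of `tanh` on `[l,u]`. -/
theorem interzono_strict_improvement_example :
    ∃ (l u c d : ℝ), l < u ∧
      IsGreatest ((fun x => tanh x - (tanh u - tanh l) / (u - l) * x) ''
        Set.Icc l u) c ∧
      IsLeast ((fun x => tanh x - (tanh u - tanh l) / (u - l) * x) ''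
        Set.Icc l u) d ∧
      (let P : Set (ℝ × ℝ) := {p | l ≤ p.1 ∧ p.1 ≤ u ∧
          (tanh u - tanh l) / (u - l) * p.1 + d ≤ p.2 ∧
          p.2 ≤ (tanh u - tanh l) / (u - l) * p.1 + c};
       let B : Set (ℝ × ℝ) := Set.Icc l u ×ˢ Set.Icc (tanh l) (tanh u);
       P ∩ B ⊂ P ∧ P ∩ B ⊂ B ∧
       {p : ℝ × ℝ | p.1 ∈ Set.Icc l u ∧ p.2 = tanh p.1} ⊆ P ∩ B) := by
  have hkeq : (tanh (2:ℝ) - tanh (-2:ℝ)) / ((2:ℝ) - (-2)) = tanh 2 / 2 := by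
    rw [Real.tanh_neg]; ring
  have hfun : (fun x => tanh x - (tanh (2:ℝ) - tanh (-2:ℝ)) / ((2:ℝ) - (-2)) * x)
      = (fun x : ℝ => tanh x - tanh 2 / 2 * x) := by
    funext x; rw [hkeq]
  set g : ℝ → ℝ := fun x => tanh x - tanh 2 / 2 * x with hg
  have hgc : ContinuousOn g (Set.Icc (-2:ℝ) 2) :=
    (my_continuous_tanh.sub (continuous_const.mul continuous_id)).continuousOn
  have hcomp : IsCompact (g '' Set.Icc (-2:ℝ) 2) :=
    (isCompact_Icc).image_of_continuousOn hgc
  have hne : (g '' Set.Icc (-2:ℝ) 2).Nonempty := ⟨g 0, ⟨0, by norm_num, rfl⟩⟩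
  obtain ⟨c, hc⟩ := hcomp.exists_isGreatest hne
  obtain ⟨d, hd⟩ := hcomp.exists_isLeast hne
  have htanh2 : 0 < tanh 2 := my_tanh_two_pos
  have hg2 : g 2 = 0 := by show tanh 2 - tanh 2 / 2 * 2 = 0; ring
  have hcpos : 0 < c := by
    have h1 : g 1 ≤ c := hc.2 ⟨1, by norm_num, rfl⟩
    have h2 : 0 < g 1 := by
      have := my_tanh_one_gt
      show 0 < tanh 1 - tanh 2 / 2 * 1
      linarith
    linarith
  have hdc : d ≤ c := le_trans (hd.2 ⟨1, by norm_num, rfl⟩) (hc.2 ⟨1, by norm_num, rfl⟩)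
  have hd0 : d ≤ 0 := hg2 ▸ hd.2 ⟨2, by norm_num, rfl⟩
  have hdlb : -2 * tanh 2 < d := by
    obtain ⟨x, hx, hgx⟩ := hd.1
    rcases eq_or_lt_of_le hx.2 with h2 | h2
    · subst h2
      rw [hg2] at hgx
      linarith
    · have ht : tanh (-2) ≤ tanh x := my_tanh_strictMono.monotone hx.1
      rw [Real.tanh_neg] at ht
      have hkx : tanh 2 / 2 * x < tanh 2 / 2 * 2 :=
        mul_lt_mul_of_pos_left h2 (by linarith)
      rw [← hgx]
      show -2 * tanh 2 < tanh x - tanh 2 / 2 * x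
      nlinarith
  refine ⟨-2, 2, c, d, by norm_num, hfun ▸ hc, hfun ▸ hd, ?_⟩
  intro P B
  have hgraph : {p : ℝ × ℝ | p.1 ∈ Set.Icc (-2:ℝ) 2 ∧ p.2 = tanh p.1} ⊆ P ∩ B := by
    intro p hp
    obtain ⟨hx, hy⟩ := hp
    have hdg : d ≤ g p.1 := hd.2 ⟨p.1, hx, rfl⟩
    have hgc' : g p.1 ≤ c := hc.2 ⟨p.1, hx, rfl⟩
    have hdg' : d ≤ tanh p.1 - tanh 2 / 2 * p.1 := hdg
    have hgc'' : tanh p.1 - tanh 2 / 2 * p.1 ≤ c := hgc'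
    constructor
    · refine ⟨hx.1, hx.2, ?_, ?_⟩ <;> rw [hkeq, hy] <;> linarith
    · exact ⟨hx, hy ▸ ⟨my_tanh_strictMono.monotone hx.1, my_tanh_strictMono.monotone hx.2⟩⟩
  refine ⟨?_, ?_, hgraph⟩
  · refine ⟨Set.inter_subset_left, fun hsub => ?_⟩
    have hmem : ((2:ℝ), tanh 2 + c) ∈ P := by
      refine ⟨by norm_num, le_refl _, ?_, ?_⟩ <;> show _ ≤ _ <;> rw [hkeq] <;> nlinarith
    have h2 : tanh 2 + c ≤ tanh 2 := by
      have := (hsub hmem).2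
      exact this.2.2
    linarith
  · refine ⟨Set.inter_subset_right, fun hsub => ?_⟩
    have hmem : ((2:ℝ), -tanh 2) ∈ B := by
      refine ⟨⟨by norm_num, le_refl _⟩, ?_, ?_⟩
      · show tanh (-2) ≤ -tanh 2
        rw [Real.tanh_neg]
      · show -tanh 2 ≤ tanh 2
        linarith
    have h2 : (tanh (2:ℝ) - tanh (-2:ℝ)) / ((2:ℝ) - (-2)) * 2 + d ≤ -tanh 2 :=
      (hsub hmem).1.2.2.1
    rw [hkeq] at h2
    linarith
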